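/- For μ ∈ M_{μ₀} and μ' ∈ M_{μ₀} with everywhere positive associated policy, the divergence Γ(μ,μ') satisfies the Pinsker-type bound Γ(μ,μ') ≥ (1/2) ‖μ − μ'‖²_{∞,1}, where ‖μ − μ'‖_{∞,1} := sup_{0 ≤ n ≤ N} ‖μ_n − μ'_n‖₁. Consequently, ψ is 1-strongly convex on M_{μ₀} with respect to the norm ‖·‖_{∞,1}. -/

import Mathlib

open Finset

noncomputable section

variable {X A : Type*} [Fintype X] [Fintype A]

def IsDist {Y : Type*} [Fintype Y] (η : Y → ℝ) : Prop :=
  (∀ y, 0 ≤ η y) ∧ ∑ y, η y = 1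

/-- Occupancy measures: `occ μ0 p π n` is the state-action distribution `μ_n^{π,p}`. -/
def occ (μ0 : X × A → ℝ) (p : ℕ → X → A → X → ℝ) (π : ℕ → X → A → ℝ) :
    ℕ → X × A → ℝ
  | 0 => μ0
  | n + 1 => fun y =>
      (∑ x, ∑ a, occ μ0 p π n (x, a) * p (n + 1) x a y.1) * π (n + 1) y.1 y.2


section PinskerScalar
open Real Set

noncomputable def Ffun (t : ℝ) : ℝ := t * Real.log t - (t - 1) - 3/2 * ((t-1)^2 / (t+2))
noncomputable def Gfun (t : ℝ) : ℝ := Real.log t - 3/2 * ((t-1)*(t+5) / (t+2)^2)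

lemma hasDerivAt_Ffun {x : ℝ} (hx : 0 < x) : HasDerivAt Ffun (Gfun x) x := by
  have h2 : x + 2 ≠ 0 := by linarith
  have h1 : HasDerivAt (fun t : ℝ => t * Real.log t) (Real.log x + 1) x := by
    have := (hasDerivAt_id x).mul (Real.hasDerivAt_log hx.ne')
    refine this.congr_deriv ?_
    simp only [id_eq]
    field_simp
  have h3 : HasDerivAt (fun t : ℝ => (t-1)^2) (2*(x-1)) x := by
    have := ((hasDerivAt_id x).sub_const 1).pow 2
    refine this.congr_deriv ?_
    simp only [id_eq]
    ring
  have h4 : HasDerivAt (fun t : ℝ => t + 2) 1 x := (hasDerivAt_id x).add_const 2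
  have h5 : HasDerivAt (fun t : ℝ => (t-1)^2 / (t+2))
      ((2*(x-1) * (x+2) - (x-1)^2 * 1) / (x+2)^2) x := h3.div h4 h2
  have h6 := ((h1.sub (((hasDerivAt_id x).sub_const 1))).sub ((h5.const_mul (3/2 : ℝ))))
  have hval : Real.log x + 1 - 1 - 3/2 * ((2*(x-1) * (x+2) - (x-1)^2 * 1) / (x+2)^2) = Gfun x := by
    unfold Gfun
    field_simp
    ring
  rw [← hval]
  exact h6

lemma hasDerivAt_Gfun {x : ℝ} (hx : 0 < x) :
    HasDerivAt Gfun ((x-1)^2*(x+8)/(x*(x+2)^3)) x := by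
  have h2 : x + 2 ≠ 0 := by linarith
  have h2' : (x + 2)^2 ≠ 0 := pow_ne_zero _ h2
  have h3 : HasDerivAt (fun t : ℝ => (t-1)*(t+5)) ((x+5) + (x-1)) x := by
    have := (((hasDerivAt_id x).sub_const 1)).mul (((hasDerivAt_id x).add_const 5))
    refine this.congr_deriv ?_
    simp only [id_eq]
    ring
  have h4 : HasDerivAt (fun t : ℝ => (t+2)^2) (2*(x+2)) x := by
    have := ((hasDerivAt_id x).add_const 2).pow 2
    refine this.congr_deriv ?_
    simp only [id_eq]
    ring
  have h5 := h3.div h4 h2'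
  have h6 := (Real.hasDerivAt_log hx.ne').sub (h5.const_mul (3/2 : ℝ))
  have hval : x⁻¹ - 3/2 * ((((x+5) + (x-1)) * (x+2)^2 - (x-1)*(x+5) * (2*(x+2))) / ((x+2)^2)^2)
      = (x-1)^2*(x+8)/(x*(x+2)^3) := by
    field_simp
    ring
  rw [← hval]
  exact h6

lemma Gfun_one : Gfun 1 = 0 := by simp [Gfun]

lemma Ffun_one : Ffun 1 = 0 := by norm_num [Ffun]

lemma Gfun_nonneg {t : ℝ} (ht : 1 ≤ t) : 0 ≤ Gfun t := by
  have mono : MonotoneOn Gfun (Ici 1) := by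
    apply monotoneOn_of_deriv_nonneg (convex_Ici 1)
    · intro x hx
      have hx0 : (0:ℝ) < x := lt_of_lt_of_le one_pos hx
      exact (hasDerivAt_Gfun hx0).continuousAt.continuousWithinAt
    · intro x hx
      rw [interior_Ici] at hx
      have hx0 : (0:ℝ) < x := lt_trans one_pos hx
      exact (hasDerivAt_Gfun hx0).differentiableAt.differentiableWithinAt
    · intro x hx
      rw [interior_Ici] at hx
      have hx0 : (0:ℝ) < x := lt_trans one_pos hx
      rw [(hasDerivAt_Gfun hx0).deriv]
      have : (0:ℝ) < x * (x+2)^3 := by positivity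
      apply div_nonneg _ this.le
      have : (0:ℝ) ≤ x + 8 := by linarith
      positivity
  have := mono (self_mem_Ici) (show t ∈ Ici (1:ℝ) from ht) ht
  rwa [Gfun_one] at this

lemma Gfun_nonpos {t : ℝ} (ht0 : 0 < t) (ht : t ≤ 1) : Gfun t ≤ 0 := by
  have mono : MonotoneOn Gfun (Icc t 1) := by
    apply monotoneOn_of_deriv_nonneg (convex_Icc t 1)
    · intro x hx
      have hx0 : (0:ℝ) < x := lt_of_lt_of_le ht0 hx.1
      exact (hasDerivAt_Gfun hx0).continuousAt.continuousWithinAt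
    · intro x hx
      rw [interior_Icc] at hx
      have hx0 : (0:ℝ) < x := lt_trans ht0 hx.1
      exact (hasDerivAt_Gfun hx0).differentiableAt.differentiableWithinAt
    · intro x hx
      rw [interior_Icc] at hx
      have hx0 : (0:ℝ) < x := lt_trans ht0 hx.1
      rw [(hasDerivAt_Gfun hx0).deriv]
      have h1 : (0:ℝ) < x * (x+2)^3 := by positivity
      apply div_nonneg _ h1.le
      have : (0:ℝ) ≤ x + 8 := by linarith
      positivity
  have := mono (show t ∈ Icc t 1 from ⟨le_refl t, ht⟩) (show (1:ℝ) ∈ Icc t 1 from ⟨ht, le_refl 1⟩) ht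
  rwa [Gfun_one] at this

lemma Ffun_nonneg {t : ℝ} (ht : 0 < t) : 0 ≤ Ffun t := by
  rcases le_total 1 t with h1 | h1
  · have mono : MonotoneOn Ffun (Ici 1) := by
      apply monotoneOn_of_deriv_nonneg (convex_Ici 1)
      · intro x hx
        have hx0 : (0:ℝ) < x := lt_of_lt_of_le one_pos hx
        exact (hasDerivAt_Ffun hx0).continuousAt.continuousWithinAt
      · intro x hx
        rw [interior_Ici] at hx
        have hx0 : (0:ℝ) < x := lt_trans one_pos hx
        exact (hasDerivAt_Ffun hx0).differentiableAt.differentiableWithinAt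
      · intro x hx
        rw [interior_Ici] at hx
        have hx0 : (0:ℝ) < x := lt_trans one_pos hx
        rw [(hasDerivAt_Ffun hx0).deriv]
        exact Gfun_nonneg hx.le
    have := mono (self_mem_Ici) (show t ∈ Ici (1:ℝ) from h1) h1
    rwa [Ffun_one] at this
  · have anti : AntitoneOn Ffun (Icc t 1) := by
      apply antitoneOn_of_deriv_nonpos (convex_Icc t 1)
      · intro x hx
        have hx0 : (0:ℝ) < x := lt_of_lt_of_le ht hx.1
        exact (hasDerivAt_Ffun hx0).continuousAt.continuousWithinAt
      · intro x hx
        rw [interior_Icc] at hx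
        have hx0 : (0:ℝ) < x := lt_trans ht hx.1
        exact (hasDerivAt_Ffun hx0).differentiableAt.differentiableWithinAt
      · intro x hx
        rw [interior_Icc] at hx
        have hx0 : (0:ℝ) < x := lt_trans ht hx.1
        rw [(hasDerivAt_Ffun hx0).deriv]
        exact Gfun_nonpos hx0 hx.2.le
    have := anti (show t ∈ Icc t 1 from ⟨le_refl t, h1⟩) (show (1:ℝ) ∈ Icc t 1 from ⟨h1, le_refl 1⟩) h1
    rwa [Ffun_one] at this

/-- Refined Pinsker pointwise inequality. -/
lemma ptwise {a b : ℝ} (ha : 0 ≤ a) (hb : 0 ≤ b) (hab : b = 0 → a = 0) :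
    a - b + 3/2 * ((a-b)^2 / (a + 2*b)) ≤ a * Real.log (a / b) := by
  rcases eq_or_lt_of_le hb with hb0 | hb0
  · have ha0 := hab hb0.symm
    simp [← hb0, ha0]
  rcases eq_or_lt_of_le ha with ha0 | ha0
  · rw [← ha0, zero_mul]
    have h : (0:ℝ) - b + 3/2 * ((0-b)^2 / (0 + 2*b)) = -(b/4) := by
      field_simp
      ring
    rw [h]
    linarith
  · have hF := Ffun_nonneg (div_pos ha0 hb0)
    unfold Ffun at hF
    have hab2 : (0:ℝ) < a + 2*b := by linarith
    have e1 : a - b + 3/2 * ((a-b)^2 / (a + 2*b)) =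
        b * (a/b - 1 + 3/2 * ((a/b-1)^2 / (a/b+2))) := by
      field_simp
    have e2 : a * Real.log (a/b) = b * (a/b * Real.log (a/b)) := by
      field_simp
    rw [e1, e2]
    have := mul_le_mul_of_nonneg_left (by linarith : a/b - 1 + 3/2 * ((a/b-1)^2/(a/b+2)) ≤ a/b * Real.log (a/b)) hb0.le
    exact this

end PinskerScalar


noncomputable def kl {Y : Type*} [Fintype Y] (η ζ : Y → ℝ) : ℝ :=
  ∑ y, η y * Real.log (η y / ζ y)


lemma pinsker {Y : Type*} [Fintype Y] {η ζ : Y → ℝ} (hη : IsDist η) (hζ : IsDist ζ)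
    (hac : ∀ y, ζ y = 0 → η y = 0) :
    (1/2) * (∑ y, |η y - ζ y|)^2 ≤ kl η ζ := by
  obtain ⟨hη0, hη1⟩ := hη
  obtain ⟨hζ0, hζ1⟩ := hζ
  set S := ∑ y, (η y - ζ y)^2 / (η y + 2 * ζ y) with hS
  have hkl : (3:ℝ)/2 * S ≤ kl η ζ := by
    have h : ∑ y, (η y - ζ y + 3/2 * ((η y - ζ y)^2 / (η y + 2*ζ y)))
        ≤ ∑ y, η y * Real.log (η y / ζ y) :=
      Finset.sum_le_sum (fun y _ => ptwise (hη0 y) (hζ0 y) (hac y))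
    have e : ∑ y, (η y - ζ y + 3/2 * ((η y - ζ y)^2 / (η y + 2*ζ y)))
        = (∑ y, η y) - (∑ y, ζ y) + 3/2 * S := by
      rw [Finset.sum_add_distrib, Finset.sum_sub_distrib, ← Finset.mul_sum]
    rw [e, hη1, hζ1] at h
    simpa [kl] using h
  have hcs : (∑ y, |η y - ζ y|)^2 ≤ S * 3 := by
    have key := Finset.sum_mul_sq_le_sq_mul_sq Finset.univ
      (fun y => |η y - ζ y| / Real.sqrt (η y + 2 * ζ y))
      (fun y => Real.sqrt (η y + 2 * ζ y))
    have hfg : ∀ y : Y, |η y - ζ y| / Real.sqrt (η y + 2 * ζ y) * Real.sqrt (η y + 2 * ζ y)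
        = |η y - ζ y| := by
      intro y
      rcases eq_or_lt_of_le (by have := hη0 y; have := hζ0 y; linarith : (0:ℝ) ≤ η y + 2 * ζ y)
        with h0 | h0
      · have hη' : η y = 0 := by have := hη0 y; have := hζ0 y; linarith
        have hζ' : ζ y = 0 := by have := hη0 y; have := hζ0 y; linarith
        simp [hη', hζ']
      · rw [div_mul_cancel₀]
        exact (Real.sqrt_ne_zero'.2 h0)
    have hf2 : ∀ y : Y, (|η y - ζ y| / Real.sqrt (η y + 2 * ζ y))^2
        = (η y - ζ y)^2 / (η y + 2 * ζ y) := by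
      intro y
      rw [div_pow, sq_abs, Real.sq_sqrt (by have := hη0 y; have := hζ0 y; linarith)]
    have hg2 : ∀ y : Y, (Real.sqrt (η y + 2 * ζ y))^2 = η y + 2 * ζ y := fun y =>
      Real.sq_sqrt (by have := hη0 y; have := hζ0 y; linarith)
    rw [Finset.sum_congr rfl (fun y _ => hfg y), Finset.sum_congr rfl (fun y _ => hf2 y),
      Finset.sum_congr rfl (fun y _ => hg2 y)] at key
    have e3 : ∑ y, (η y + 2 * ζ y) = 3 := by
      rw [Finset.sum_add_distrib, ← Finset.mul_sum, hη1, hζ1]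
      norm_num
    rwa [e3] at key
  nlinarith [hcs, hkl]

lemma log_sum {ι : Type*} [Fintype ι] {a b : ι → ℝ} (ha : ∀ i, 0 ≤ a i) (hb : ∀ i, 0 ≤ b i)
    (hab : ∀ i, b i = 0 → a i = 0) :
    (∑ i, a i) * Real.log ((∑ i, a i) / (∑ i, b i)) ≤ ∑ i, a i * Real.log (a i / b i) := by
  set A := ∑ i, a i with hA
  set B := ∑ i, b i with hB
  by_cases hB0 : B = 0
  · have hB0' : ∑ i, b i = 0 := hB0
    have hb' : ∀ i ∈ Finset.univ (α := ι), b i = 0 :=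
      (Finset.sum_eq_zero_iff_of_nonneg (fun i _ => hb i)).1 hB0'
    have ha' : ∀ i, a i = 0 := fun i => hab i (hb' i (Finset.mem_univ i))
    have hA0 : A = 0 := by rw [hA]; exact Finset.sum_eq_zero (fun i _ => ha' i)
    rw [hA0, zero_mul]
    apply Finset.sum_nonneg
    intro i _
    rw [ha' i, zero_mul]
  have hBpos : 0 < B := lt_of_le_of_ne (Finset.sum_nonneg (fun i _ => hb i)) (Ne.symm hB0)
  have key : ∀ i, a i * Real.log (A/B) + (a i - b i * (A/B)) ≤ a i * Real.log (a i / b i) := by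
    intro i
    rcases eq_or_lt_of_le (ha i) with ha0 | ha0
    · rw [← ha0]
      simp only [zero_mul, zero_add, zero_sub, zero_mul]
      have : 0 ≤ b i * (A/B) := mul_nonneg (hb i)
        (div_nonneg (Finset.sum_nonneg (fun i _ => ha i)) hBpos.le)
      linarith
    · have hbi : 0 < b i := by
        rcases eq_or_lt_of_le (hb i) with h0 | h0
        · exact absurd (hab i h0.symm) (by intro h; rw [h] at ha0; exact lt_irrefl 0 ha0)
        · exact h0
      have hApos : 0 < A := lt_of_lt_of_le ha0
        (Finset.single_le_sum (fun j _ => ha j) (Finset.mem_univ i))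
      have hx : (0:ℝ) < (a i / b i) / (A / B) := by positivity
      have hlog : 1 - ((a i / b i) / (A / B))⁻¹ ≤ Real.log ((a i / b i) / (A / B)) :=
        Real.one_sub_inv_le_log_of_pos hx
      rw [Real.log_div (div_pos ha0 hbi).ne' (div_pos hApos hBpos).ne'] at hlog
      have := mul_le_mul_of_nonneg_left hlog (ha i)
      have e : a i * (1 - ((a i / b i) / (A / B))⁻¹) = a i - b i * (A/B) := by
        field_simp
      rw [e] at this
      linarith [this]
  have hsum := Finset.sum_le_sum (fun i (_ : i ∈ Finset.univ) => key i)
  have e2 : ∑ i, (a i * Real.log (A/B) + (a i - b i * (A/B)))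
      = A * Real.log (A/B) + (A - B * (A/B)) := by
    rw [Finset.sum_add_distrib, Finset.sum_sub_distrib, ← Finset.sum_mul, ← Finset.sum_mul]
  rw [e2, mul_div_cancel₀ _ hB0] at hsum
  simpa using hsum

lemma dp {Z Y : Type*} [Fintype Z] [Fintype Y] {μ μ' : Z → ℝ} {P : Z → Y → ℝ}
    (hμ : ∀ z, 0 ≤ μ z) (hμ' : ∀ z, 0 ≤ μ' z) (hP : ∀ z, IsDist (P z))
    (hac : ∀ z, μ' z = 0 → μ z = 0) :
    kl (fun y => ∑ z, μ z * P z y) (fun y => ∑ z, μ' z * P z y) ≤ kl μ μ' := by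
  unfold kl
  calc ∑ y, (∑ z, μ z * P z y) * Real.log ((∑ z, μ z * P z y) / (∑ z, μ' z * P z y))
      ≤ ∑ y, ∑ z, (μ z * P z y) * Real.log ((μ z * P z y) / (μ' z * P z y)) := by
        apply Finset.sum_le_sum
        intro y _
        exact log_sum (fun z => mul_nonneg (hμ z) ((hP z).1 y))
          (fun z => mul_nonneg (hμ' z) ((hP z).1 y))
          (fun z h0 => by
            rcases mul_eq_zero.1 h0 with h | h
            · rw [hac z h, zero_mul]
            · rw [h, mul_zero])
    _ = ∑ z, ∑ y, (μ z * P z y) * Real.log ((μ z * P z y) / (μ' z * P z y)) := Finset.sum_comm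
    _ = ∑ z, μ z * Real.log (μ z / μ' z) := by
        apply Finset.sum_congr rfl
        intro z _
        have e : ∀ y, (μ z * P z y) * Real.log ((μ z * P z y) / (μ' z * P z y))
            = (μ z * Real.log (μ z / μ' z)) * P z y := by
          intro y
          by_cases hP0 : P z y = 0
          · simp [hP0]
          by_cases hμ0 : μ z = 0
          · simp [hμ0]
          by_cases hμ'0 : μ' z = 0
          · rw [hac z hμ'0] at hμ0
            exact absurd rfl hμ0
          · rw [mul_div_mul_right _ _ hP0]
            ring
        rw [Finset.sum_congr rfl (fun y _ => e y), ← Finset.mul_sum, (hP z).2, mul_one]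

section OccLemmas

variable (μ0 : X × A → ℝ) (p : ℕ → X → A → X → ℝ) (π π' : ℕ → X → A → ℝ)

lemma occ_succ_eq (n : ℕ) (y : X × A) :
    occ μ0 p π (n+1) y
      = (∑ z : X × A, occ μ0 p π n z * p (n + 1) z.1 z.2 y.1) * π (n + 1) y.1 y.2 := by
  show (∑ x, ∑ a, occ μ0 p π n (x, a) * p (n + 1) x a y.1) * _ = _
  rw [Fintype.sum_prod_type]

lemma occ_isDist (hμ0 : IsDist μ0) (hp : ∀ n x a, IsDist (p n x a))
    (hπ : ∀ n x, IsDist (π n x)) : ∀ n, IsDist (occ μ0 p π n) := by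
  intro n
  induction n with
  | zero => exact hμ0
  | succ n ih =>
    constructor
    · intro y
      rw [occ_succ_eq]
      exact mul_nonneg (Finset.sum_nonneg fun z _ =>
        mul_nonneg (ih.1 z) ((hp (n+1) z.1 z.2).1 y.1)) ((hπ (n+1) y.1).1 y.2)
    · rw [Fintype.sum_prod_type]
      have e1 : ∀ x : X, ∑ a : A, occ μ0 p π (n+1) (x, a)
          = ∑ z : X × A, occ μ0 p π n z * p (n + 1) z.1 z.2 x := by
        intro x
        have : ∀ a : A, occ μ0 p π (n+1) (x, a)
            = (∑ z : X × A, occ μ0 p π n z * p (n + 1) z.1 z.2 x) * π (n + 1) x a :=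
          fun a => occ_succ_eq μ0 p π n (x, a)
        rw [Finset.sum_congr rfl (fun a _ => this a), ← Finset.mul_sum, (hπ (n+1) x).2, mul_one]
      rw [Finset.sum_congr rfl (fun x _ => e1 x), Finset.sum_comm]
      have e2 : ∀ z : X × A, ∑ x : X, occ μ0 p π n z * p (n + 1) z.1 z.2 x
          = occ μ0 p π n z := by
        intro z
        rw [← Finset.mul_sum, (hp (n+1) z.1 z.2).2, mul_one]
      rw [Finset.sum_congr rfl (fun z _ => e2 z)]
      exact ih.2

lemma occ_ac (hμ0 : IsDist μ0) (hp : ∀ n x a, IsDist (p n x a))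
    (hπ' : ∀ n x, IsDist (π' n x)) (hpos : ∀ n x a, 0 < π' n x a) :
    ∀ n y, occ μ0 p π' n y = 0 → occ μ0 p π n y = 0 := by
  intro n
  induction n with
  | zero => exact fun y h => h
  | succ n ih =>
    intro y h
    rw [occ_succ_eq] at h ⊢
    have hν' : ∑ z : X × A, occ μ0 p π' n z * p (n + 1) z.1 z.2 y.1 = 0 := by
      rcases mul_eq_zero.1 h with h0 | h0
      · exact h0
      · exact absurd h0 (hpos (n+1) y.1 y.2).ne'
    have hterm := (Finset.sum_eq_zero_iff_of_nonneg (fun z _ =>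
      mul_nonneg ((occ_isDist μ0 p π' hμ0 hp hπ' n).1 z) ((hp (n+1) z.1 z.2).1 y.1))).1 hν'
    have hν : ∑ z : X × A, occ μ0 p π n z * p (n + 1) z.1 z.2 y.1 = 0 := by
      apply Finset.sum_eq_zero
      intro z _
      rcases mul_eq_zero.1 (hterm z (Finset.mem_univ z)) with h0 | h0
      · rw [ih z h0, zero_mul]
      · rw [h0, mul_zero]
    rw [hν, zero_mul]

end OccLemmas

section MainAux

variable (μ0 : X × A → ℝ) (p : ℕ → X → A → X → ℝ) (π π' : ℕ → X → A → ℝ)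

lemma chain_step (hμ0 : IsDist μ0) (hp : ∀ n x a, IsDist (p n x a))
    (hπ : ∀ n x, IsDist (π n x)) (hπ' : ∀ n x, IsDist (π' n x))
    (hpos : ∀ n x a, 0 < π' n x a) (n : ℕ) :
    kl (occ μ0 p π (n+1)) (occ μ0 p π' (n+1)) =
      kl (fun x => ∑ z : X × A, occ μ0 p π n z * p (n+1) z.1 z.2 x)
         (fun x => ∑ z : X × A, occ μ0 p π' n z * p (n+1) z.1 z.2 x)
      + ∑ x, ∑ a, occ μ0 p π (n+1) (x, a) * Real.log (π (n+1) x a / π' (n+1) x a) := by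
  set ν : X → ℝ := fun x => ∑ z : X × A, occ μ0 p π n z * p (n+1) z.1 z.2 x with hνdef
  set ν' : X → ℝ := fun x => ∑ z : X × A, occ μ0 p π' n z * p (n+1) z.1 z.2 x with hν'def
  have hν0 : ∀ x, 0 ≤ ν x := fun x => Finset.sum_nonneg fun z _ =>
    mul_nonneg ((occ_isDist μ0 p π hμ0 hp hπ n).1 z) ((hp (n+1) z.1 z.2).1 x)
  have hν'0 : ∀ x, 0 ≤ ν' x := fun x => Finset.sum_nonneg fun z _ =>
    mul_nonneg ((occ_isDist μ0 p π' hμ0 hp hπ' n).1 z) ((hp (n+1) z.1 z.2).1 x)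
  have hνac : ∀ x, ν' x = 0 → ν x = 0 := by
    intro x h
    have hterm := (Finset.sum_eq_zero_iff_of_nonneg (fun z _ =>
      mul_nonneg ((occ_isDist μ0 p π' hμ0 hp hπ' n).1 z) ((hp (n+1) z.1 z.2).1 x))).1 h
    apply Finset.sum_eq_zero
    intro z _
    rcases mul_eq_zero.1 (hterm z (Finset.mem_univ z)) with h0 | h0
    · rw [occ_ac μ0 p π π' hμ0 hp hπ' hpos n z h0, zero_mul]
    · rw [h0, mul_zero]
  have hocc : ∀ y : X × A, occ μ0 p π (n+1) y = ν y.1 * π (n+1) y.1 y.2 :=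
    fun y => occ_succ_eq μ0 p π n y
  have hocc' : ∀ y : X × A, occ μ0 p π' (n+1) y = ν' y.1 * π' (n+1) y.1 y.2 :=
    fun y => occ_succ_eq μ0 p π' n y
  unfold kl
  rw [Fintype.sum_prod_type]
  have ptw : ∀ (x : X) (a : A),
      occ μ0 p π (n+1) (x, a) * Real.log (occ μ0 p π (n+1) (x, a) / occ μ0 p π' (n+1) (x, a))
      = ν x * π (n+1) x a * Real.log (ν x / ν' x)
        + occ μ0 p π (n+1) (x, a) * Real.log (π (n+1) x a / π' (n+1) x a) := by
    intro x a
    rw [hocc (x, a), hocc' (x, a)]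
    by_cases hν : ν x = 0
    · simp [hν]
    by_cases hπ0 : π (n+1) x a = 0
    · simp [hπ0]
    have hνpos : 0 < ν x := lt_of_le_of_ne (hν0 x) (Ne.symm hν)
    have hν'pos : 0 < ν' x := by
      rcases eq_or_lt_of_le (hν'0 x) with h0 | h0
      · exact absurd (hνac x h0.symm) hν
      · exact h0
    have hπpos : 0 < π (n+1) x a := lt_of_le_of_ne ((hπ (n+1) x).1 a) (Ne.symm hπ0)
    have hπ'pos := hpos (n+1) x a
    have hratio : ν x * π (n+1) x a / (ν' x * π' (n+1) x a)
        = (ν x / ν' x) * (π (n+1) x a / π' (n+1) x a) := by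
      rw [div_mul_div_comm]
    rw [hratio, Real.log_mul (div_pos hνpos hν'pos).ne' (div_pos hπpos hπ'pos).ne']
    ring
  rw [Finset.sum_congr rfl (fun x _ => Finset.sum_congr rfl (fun a _ => ptw x a))]
  have e : ∀ x : X, ∑ a : A, (ν x * π (n+1) x a * Real.log (ν x / ν' x)
      + occ μ0 p π (n+1) (x, a) * Real.log (π (n+1) x a / π' (n+1) x a))
      = ν x * Real.log (ν x / ν' x)
        + ∑ a : A, occ μ0 p π (n+1) (x, a) * Real.log (π (n+1) x a / π' (n+1) x a) := by
    intro x
    rw [Finset.sum_add_distrib]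
    congr 1
    have : ∀ a : A, ν x * π (n+1) x a * Real.log (ν x / ν' x)
        = (ν x * Real.log (ν x / ν' x)) * π (n+1) x a := fun a => by ring
    rw [Finset.sum_congr rfl (fun a _ => this a), ← Finset.mul_sum, (hπ (n+1) x).2, mul_one]
  rw [Finset.sum_congr rfl (fun x _ => e x), Finset.sum_add_distrib]

lemma kl_occ_le (hμ0 : IsDist μ0) (hp : ∀ n x a, IsDist (p n x a))
    (hπ : ∀ n x, IsDist (π n x)) (hπ' : ∀ n x, IsDist (π' n x))
    (hpos : ∀ n x a, 0 < π' n x a) : ∀ n : ℕ,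
    kl (occ μ0 p π n) (occ μ0 p π' n) ≤
      ∑ m ∈ Icc 1 n, ∑ x, ∑ a, occ μ0 p π m (x, a) * Real.log (π m x a / π' m x a) := by
  intro n
  induction n with
  | zero =>
    have : kl (occ μ0 p π 0) (occ μ0 p π' 0) = 0 := by
      unfold kl
      apply Finset.sum_eq_zero
      intro y _
      show μ0 y * Real.log (μ0 y / μ0 y) = 0
      by_cases h : μ0 y = 0
      · rw [h, zero_mul]
      · rw [div_self h, Real.log_one, mul_zero]
    rw [this]
    simp
  | succ n ih =>
    have hstep := chain_step μ0 p π π' hμ0 hp hπ hπ' hpos n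
    have hdp : kl (fun x => ∑ z : X × A, occ μ0 p π n z * p (n+1) z.1 z.2 x)
        (fun x => ∑ z : X × A, occ μ0 p π' n z * p (n+1) z.1 z.2 x)
        ≤ kl (occ μ0 p π n) (occ μ0 p π' n) :=
      dp (occ_isDist μ0 p π hμ0 hp hπ n).1 (occ_isDist μ0 p π' hμ0 hp hπ' n).1
        (fun z => hp (n+1) z.1 z.2) (occ_ac μ0 p π π' hμ0 hp hπ' hpos n)
    rw [Finset.sum_Icc_succ_top (by omega : 1 ≤ n + 1)]
    calc kl (occ μ0 p π (n+1)) (occ μ0 p π' (n+1))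
        ≤ kl (occ μ0 p π n) (occ μ0 p π' n)
          + ∑ x, ∑ a, occ μ0 p π (n+1) (x, a) * Real.log (π (n+1) x a / π' (n+1) x a) := by
          rw [hstep]; linarith
      _ ≤ _ := by
          have := ih
          linarith

lemma D_nonneg (hμ0 : IsDist μ0) (hp : ∀ n x a, IsDist (p n x a))
    (hπ : ∀ n x, IsDist (π n x)) (hπ' : ∀ n x, IsDist (π' n x))
    (hpos : ∀ n x a, 0 < π' n x a) (m : ℕ) (hm : 1 ≤ m) :
    0 ≤ ∑ x, ∑ a, occ μ0 p π m (x, a) * Real.log (π m x a / π' m x a) := by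
  obtain ⟨k, rfl⟩ := Nat.exists_eq_add_of_le hm
  apply Finset.sum_nonneg
  intro x _
  have hocc : ∀ a : A, occ μ0 p π (1 + k) (x, a)
      = (∑ z : X × A, occ μ0 p π k z * p (k+1) z.1 z.2 x) * π (k+1) x a := by
    intro a
    rw [show 1 + k = k + 1 by omega]
    exact occ_succ_eq μ0 p π k (x, a)
  set ν := ∑ z : X × A, occ μ0 p π k z * p (k+1) z.1 z.2 x with hν
  have hν0 : 0 ≤ ν := Finset.sum_nonneg fun z _ =>
    mul_nonneg ((occ_isDist μ0 p π hμ0 hp hπ k).1 z) ((hp (k+1) z.1 z.2).1 x)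
  have e : ∀ a : A, occ μ0 p π (1+k) (x, a) * Real.log (π (1+k) x a / π' (1+k) x a)
      = ν * (π (k+1) x a * Real.log (π (k+1) x a / π' (k+1) x a)) := by
    intro a
    rw [hocc a, show 1 + k = k + 1 by omega]
    ring
  rw [Finset.sum_congr rfl (fun a _ => e a), ← Finset.mul_sum]
  apply mul_nonneg hν0
  have hls := log_sum (a := π (k+1) x) (b := π' (k+1) x) ((hπ (k+1) x).1) ((hπ' (k+1) x).1)
    (fun a h0 => absurd h0 (hpos (k+1) x a).ne')
  rw [(hπ (k+1) x).2, (hπ' (k+1) x).2] at hls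
  simpa using hls

end MainAux

/-- Pinsker-type bound: `Γ(μ^π, μ^{π'}) ≥ (1/2) ‖μ^π − μ^{π'}‖²_{∞,1}`, i.e. the divergence
dominates half the squared L1 distance at every step `0 ≤ n ≤ N` (so also the squared sup).
This expresses the 1-strong convexity of `ψ` w.r.t. `‖·‖_{∞,1}` on `M_{μ0}`. -/
theorem gamma_ge_half_sq_sup_l1 (N : ℕ) (hN : 1 ≤ N)
    (μ0 : X × A → ℝ) (hμ0 : IsDist μ0)
    (p : ℕ → X → A → X → ℝ) (hp : ∀ n x a, IsDist (p n x a))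
    (π π' : ℕ → X → A → ℝ)
    (hπ : ∀ n x, IsDist (π n x)) (hπ' : ∀ n x, IsDist (π' n x))
    (hpos : ∀ n x a, 0 < π' n x a)
    (n : ℕ) (hn : n ≤ N) :
    (1 / 2) * (∑ y : X × A, |occ μ0 p π n y - occ μ0 p π' n y|) ^ 2 ≤
      ∑ m ∈ Icc 1 N, ∑ x, ∑ a,
        occ μ0 p π m (x, a) * Real.log (π m x a / π' m x a) := by
  have h1 := pinsker (occ_isDist μ0 p π hμ0 hp hπ n) (occ_isDist μ0 p π' hμ0 hp hπ' n)
    (occ_ac μ0 p π π' hμ0 hp hπ' hpos n)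
  have h2 := kl_occ_le μ0 p π π' hμ0 hp hπ hπ' hpos n
  have h3 : ∑ m ∈ Icc 1 n, ∑ x, ∑ a, occ μ0 p π m (x, a) * Real.log (π m x a / π' m x a)
      ≤ ∑ m ∈ Icc 1 N, ∑ x, ∑ a, occ μ0 p π m (x, a) * Real.log (π m x a / π' m x a) := by
    apply Finset.sum_le_sum_of_subset_of_nonneg (Finset.Icc_subset_Icc_right hn)
    intro m hm _
    exact D_nonneg μ0 p π π' hμ0 hp hπ hπ' hpos m (Finset.mem_Icc.1 hm).1
  linarith
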